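/- Let k : (0,∞) → [0,∞) be nonincreasing and lower semicontinuous, and let σ be a locally finite positive Borel measure on ℝ^n satisfying a doubling condition. Then there exists C > 0 such that for every x ∈ ℝ^n and every r > 0, (1/C) k̄(2r)(x) ≤ k̄(r)(x) ≤ C k̄(2r)(x). -/

import Mathlib

open MeasureTheory ENNReal Set Metric
open scoped Classical ENNReal NNReal

noncomputable section

/-- We model `ℝ^n` as `EuclideanSpace ℝ (Fin n)`. -/
abbrev Euc (n : ℕ) := EuclideanSpace ℝ (Fin n)

/-- `k̄(r)(x) = (1/σ(B(x,r))) ∫_0^r k(s) σ(B(x,s)) ds/s`. -/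
def kbar (n : ℕ) (σ : Measure (Euc n)) (k : ℝ → ℝ) (r : ℝ) (x : Euc n) : ℝ≥0∞ :=
  (σ (ball x r))⁻¹ * ∫⁻ s in Ioo (0:ℝ) r, ENNReal.ofReal (k s / s) * σ (ball x s)

/-- `σ` is a doubling measure: `σ(B(x,2r)) ≤ C₀ σ(B(x,r))` for all `x`, `r > 0`. -/
def Doubling (n : ℕ) (σ : Measure (Euc n)) : Prop :=
  ∃ C₀ : ℝ, 0 < C₀ ∧ ∀ (x : Euc n) (r : ℝ), 0 < r →
    σ (ball x (2 * r)) ≤ ENNReal.ofReal C₀ * σ (ball x r)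

/-- The pair `(k,σ)` satisfies the logarithmic bounded oscillation (LBO) condition:
`sup_{y ∈ B(x,r)} k̄(r)(y) ≤ A inf_{y ∈ B(x,r)} k̄(r)(y)` uniformly in `x`, `r`. -/
def LBO (n : ℕ) (σ : Measure (Euc n)) (k : ℝ → ℝ) : Prop :=
  ∃ A : ℝ, 0 < A ∧ ∀ (x : Euc n) (r : ℝ), 0 < r →
    ∀ y ∈ ball x r, ∀ z ∈ ball x r, kbar n σ k r y ≤ ENNReal.ofReal A * kbar n σ k r z

/-- If `k : (0,∞) → [0,∞)` is nonincreasing and lower semicontinuous and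
`σ` is a locally finite positive Borel measure on `ℝ^n` satisfying a doubling condition,
then there is `C > 0` such that `(1/C) k̄(2r)(x) ≤ k̄(r)(x) ≤ C k̄(2r)(x)` for all `x`,
`r > 0`. -/
theorem stmt11 (n : ℕ) (hn : 0 < n) (k : ℝ → ℝ)
    (hk0 : ∀ r ∈ Ioi (0:ℝ), 0 ≤ k r) (hmono : AntitoneOn k (Ioi (0:ℝ)))
    (hlsc : LowerSemicontinuousOn k (Ioi (0:ℝ)))
    (σ : Measure (Euc n)) [IsLocallyFiniteMeasure σ] (hσ : Doubling n σ) :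
    ∃ C : ℝ, 0 < C ∧ ∀ (x : Euc n) (r : ℝ), 0 < r →
      ENNReal.ofReal C⁻¹ * kbar n σ k (2 * r) x ≤ kbar n σ k r x ∧
      kbar n σ k r x ≤ ENNReal.ofReal C * kbar n σ k (2 * r) x := by
  obtain ⟨C₀, hC₀, hdbl⟩ := hσ
  refine ⟨C₀ + 1 + 2 * C₀ ^ 2, by positivity, fun x r hr => ?_⟩
  set C : ℝ := C₀ + 1 + 2 * C₀ ^ 2 with hCdef
  have hC : 0 < C := by positivity
  set I : ℝ → ℝ≥0∞ := fun t => ∫⁻ s in Ioo (0:ℝ) t, ENNReal.ofReal (k s / s) * σ (ball x s)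
    with hI
  -- doubling applied at r and r/2
  have hd1 : σ (ball x (2 * r)) ≤ ENNReal.ofReal C₀ * σ (ball x r) := hdbl x r hr
  have hd2 : σ (ball x r) ≤ ENNReal.ofReal C₀ * σ (ball x (r / 2)) := by
    have := hdbl x (r / 2) (by linarith)
    rwa [mul_div_cancel₀ _ (two_ne_zero)] at this
  have hkr : 0 ≤ k r := hk0 r hr
  -- tail estimate: ∫ over Ico r (2r) ≤ ofReal (k r) * σ(B(x,2r))
  have tail_le : (∫⁻ s in Ico r (2 * r), ENNReal.ofReal (k s / s) * σ (ball x s))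
      ≤ ENNReal.ofReal (k r) * σ (ball x (2 * r)) := by
    have hb : ∀ s ∈ Ico r (2 * r), ENNReal.ofReal (k s / s) * σ (ball x s)
        ≤ ENNReal.ofReal (k r / r) * σ (ball x (2 * r)) := by
      intro s hs
      have hs0 : 0 < s := lt_of_lt_of_le hr hs.1
      have hks : k s ≤ k r := hmono hr hs0 hs.1
      refine mul_le_mul' (ENNReal.ofReal_le_ofReal ?_) (measure_mono (ball_subset_ball ?_))
      · exact div_le_div₀ hkr hks hr hs.1
      · linarith [hs.2.le]
    calc (∫⁻ s in Ico r (2 * r), ENNReal.ofReal (k s / s) * σ (ball x s))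
        ≤ ∫⁻ _ in Ico r (2 * r), ENNReal.ofReal (k r / r) * σ (ball x (2 * r)) :=
          setLIntegral_mono' measurableSet_Ico hb
      _ = ENNReal.ofReal (k r / r) * σ (ball x (2 * r)) * ENNReal.ofReal r := by
          rw [setLIntegral_const, Real.volume_Ico]
          congr 1
          ring_nf
      _ = ENNReal.ofReal (k r) * σ (ball x (2 * r)) := by
          rw [mul_right_comm, ← ENNReal.ofReal_mul (by positivity),
            div_mul_cancel₀ _ hr.ne']
  -- lower bound on I r
  have Ir_ge : ENNReal.ofReal (k r / 2) * σ (ball x (r / 2)) ≤ I r := by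
    have hb : ∀ s ∈ Ioo (r / 2) r, ENNReal.ofReal (k r / r) * σ (ball x (r / 2))
        ≤ ENNReal.ofReal (k s / s) * σ (ball x s) := by
      intro s hs
      have hs0 : (0:ℝ) < s := lt_trans (by linarith) hs.1
      have hks : k r ≤ k s := hmono hs0 hr hs.2.le
      refine mul_le_mul' (ENNReal.ofReal_le_ofReal ?_) (measure_mono (ball_subset_ball ?_))
      · exact div_le_div₀ (hk0 s hs0) hks hs0 hs.2.le
      · linarith [hs.1.le]
    calc ENNReal.ofReal (k r / 2) * σ (ball x (r / 2))
        = ENNReal.ofReal (k r / r) * σ (ball x (r / 2)) * ENNReal.ofReal (r - r / 2) := by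
          rw [mul_right_comm, ← ENNReal.ofReal_mul (by positivity)]
          congr 2
          field_simp
          ring
      _ = ∫⁻ _ in Ioo (r / 2) r, ENNReal.ofReal (k r / r) * σ (ball x (r / 2)) := by
          rw [setLIntegral_const, Real.volume_Ioo]
      _ ≤ ∫⁻ s in Ioo (r / 2) r, ENNReal.ofReal (k s / s) * σ (ball x s) :=
          setLIntegral_mono' measurableSet_Ioo hb
      _ ≤ I r := lintegral_mono_set (fun s hs => ⟨lt_trans (by linarith) hs.1, hs.2⟩)
  -- tail ≤ 2 C₀² I r
  have tail_le' : (∫⁻ s in Ico r (2 * r), ENNReal.ofReal (k s / s) * σ (ball x s))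
      ≤ ENNReal.ofReal (2 * C₀ ^ 2) * I r := by
    calc (∫⁻ s in Ico r (2 * r), ENNReal.ofReal (k s / s) * σ (ball x s))
        ≤ ENNReal.ofReal (k r) * σ (ball x (2 * r)) := tail_le
      _ ≤ ENNReal.ofReal (k r) * (ENNReal.ofReal C₀ * (ENNReal.ofReal C₀ * σ (ball x (r / 2)))) :=
          mul_le_mul_right (hd1.trans (mul_le_mul_right hd2 _)) _
      _ = ENNReal.ofReal (2 * C₀ ^ 2) * (ENNReal.ofReal (k r / 2) * σ (ball x (r / 2))) := by
          have h : ENNReal.ofReal (k r) * (ENNReal.ofReal C₀ * ENNReal.ofReal C₀)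
              = ENNReal.ofReal (2 * C₀ ^ 2) * ENNReal.ofReal (k r / 2) := by
            rw [← ENNReal.ofReal_mul hC₀.le, ← ENNReal.ofReal_mul hkr,
              ← ENNReal.ofReal_mul (by positivity)]
            congr 1; ring
          calc ENNReal.ofReal (k r)
                * (ENNReal.ofReal C₀ * (ENNReal.ofReal C₀ * σ (ball x (r / 2))))
              = ENNReal.ofReal (k r) * (ENNReal.ofReal C₀ * ENNReal.ofReal C₀)
                * σ (ball x (r / 2)) := by ring
            _ = _ := by rw [h, mul_assoc]
      _ ≤ ENNReal.ofReal (2 * C₀ ^ 2) * I r := mul_le_mul_right Ir_ge _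
  -- I (2r) ≤ (1 + 2C₀²) I r
  have I_le : I (2 * r) ≤ ENNReal.ofReal (1 + 2 * C₀ ^ 2) * I r := by
    have hsub : Ioo (0:ℝ) (2 * r) ⊆ Ioo 0 r ∪ Ico r (2 * r) := by
      intro s hs
      rcases lt_or_ge s r with h | h
      · exact Or.inl ⟨hs.1, h⟩
      · exact Or.inr ⟨h, hs.2⟩
    calc I (2 * r) ≤ ∫⁻ s in Ioo 0 r ∪ Ico r (2 * r),
            ENNReal.ofReal (k s / s) * σ (ball x s) := lintegral_mono_set hsub
      _ ≤ I r + ∫⁻ s in Ico r (2 * r), ENNReal.ofReal (k s / s) * σ (ball x s) :=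
          lintegral_union_le _ _ _
      _ ≤ I r + ENNReal.ofReal (2 * C₀ ^ 2) * I r := add_le_add_right tail_le' _
      _ = ENNReal.ofReal (1 + 2 * C₀ ^ 2) * I r := by
          rw [ENNReal.ofReal_add (by norm_num) (by positivity), ENNReal.ofReal_one,
            add_mul, one_mul]
  -- inverse measure comparisons
  have hinv1 : (σ (ball x r))⁻¹ ≤ ENNReal.ofReal C₀ * (σ (ball x (2 * r)))⁻¹ := by
    have h1 : (ENNReal.ofReal C₀ * σ (ball x r))⁻¹ ≤ (σ (ball x (2 * r)))⁻¹ :=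
      ENNReal.inv_le_inv' hd1
    have h2 : (ENNReal.ofReal C₀ * σ (ball x r))⁻¹
        = (ENNReal.ofReal C₀)⁻¹ * (σ (ball x r))⁻¹ :=
      ENNReal.mul_inv (Or.inl (by simp [ENNReal.ofReal_eq_zero]; linarith)) (Or.inl ENNReal.ofReal_ne_top)
    calc (σ (ball x r))⁻¹
        = ENNReal.ofReal C₀ * ((ENNReal.ofReal C₀)⁻¹ * (σ (ball x r))⁻¹) := by
          rw [← mul_assoc, ENNReal.mul_inv_cancel (by simp [ENNReal.ofReal_eq_zero]; linarith)
            ENNReal.ofReal_ne_top, one_mul]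
      _ ≤ ENNReal.ofReal C₀ * (σ (ball x (2 * r)))⁻¹ := by
          rw [← h2]; exact mul_le_mul_right h1 _
  have hinv2 : (σ (ball x (2 * r)))⁻¹ ≤ (σ (ball x r))⁻¹ :=
    ENNReal.inv_le_inv' (measure_mono (ball_subset_ball (by linarith)))
  -- main inequalities
  have upper : kbar n σ k r x ≤ ENNReal.ofReal C * kbar n σ k (2 * r) x := by
    have hIm : I r ≤ I (2 * r) :=
      lintegral_mono_set (Ioo_subset_Ioo le_rfl (by linarith))
    calc kbar n σ k r x = (σ (ball x r))⁻¹ * I r := rfl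
      _ ≤ (ENNReal.ofReal C₀ * (σ (ball x (2 * r)))⁻¹) * I (2 * r) :=
          mul_le_mul' hinv1 hIm
      _ = ENNReal.ofReal C₀ * kbar n σ k (2 * r) x := by rw [mul_assoc]; rfl
      _ ≤ ENNReal.ofReal C * kbar n σ k (2 * r) x := by
          refine mul_le_mul_left (ENNReal.ofReal_le_ofReal ?_) _
          nlinarith
  have lower : kbar n σ k (2 * r) x ≤ ENNReal.ofReal C * kbar n σ k r x := by
    calc kbar n σ k (2 * r) x = (σ (ball x (2 * r)))⁻¹ * I (2 * r) := rfl
      _ ≤ (σ (ball x r))⁻¹ * (ENNReal.ofReal (1 + 2 * C₀ ^ 2) * I r) :=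
          mul_le_mul' hinv2 I_le
      _ = ENNReal.ofReal (1 + 2 * C₀ ^ 2) * kbar n σ k r x := by
          rw [← mul_assoc, mul_comm ((σ (ball x r))⁻¹), mul_assoc]; rfl
      _ ≤ ENNReal.ofReal C * kbar n σ k r x := by
          refine mul_le_mul_left (ENNReal.ofReal_le_ofReal ?_) _
          nlinarith
  refine ⟨?_, upper⟩
  calc ENNReal.ofReal C⁻¹ * kbar n σ k (2 * r) x
      ≤ ENNReal.ofReal C⁻¹ * (ENNReal.ofReal C * kbar n σ k r x) := mul_le_mul_right lower _
    _ = kbar n σ k r x := by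
        rw [← mul_assoc, ← ENNReal.ofReal_mul (by positivity), inv_mul_cancel₀ hC.ne',
          ENNReal.ofReal_one, one_mul]
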